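/- Loosening: in the strict λ-calculus, (1) if Γ; (Ω, x:C); Δ ⊢ M : A, then (Γ, x:C); Ω; Δ ⊢ M : A, and (2) if Γ; Ω; (Δ, x:C) ⊢ M : A, then (Γ, x:C); Ω; Δ ⊢ M : A. -/
import Mathlib


/- A strict λ-calculus with strict (1), irrelevant (0) and unrestricted (u)
   function spaces, in locally nameless representation.  Contexts are finite
   sets of (variable name, type) declarations, split into three zones
   Γ (unrestricted); Ω (irrelevant); Δ (strict). -/

/-- Labels `k ::= 1 | 0 | u`. -/
inductive Lab : Type
  | one
  | zero
  | un
deriving DecidableEq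

/-- Types `A ::= a | A₁ →ᵏ A₂` over atomic types `a` (names in ℕ). -/
inductive Ty : Type
  | atom : ℕ → Ty
  | arr : Ty → Lab → Ty → Ty
deriving DecidableEq

/-- Terms `M ::= c | x | λxᵏ:A.M | M Nᵏ` (locally nameless: bound variables
    are de Bruijn indices, free variables/parameters are names). -/
inductive Tm : Type
  | const : ℕ → Tm
  | bvar : ℕ → Tm
  | fvar : ℕ → Tm
  | lam : Lab → Ty → Tm → Tm
  | app : Tm → Lab → Tm → Tm
deriving DecidableEq

/-- Opening: replace the bound variable `k` by the term `u`. -/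
def Tm.openRec (k : ℕ) (u : Tm) : Tm → Tm
  | .const c => .const c
  | .bvar i => if i = k then u else .bvar i
  | .fvar x => .fvar x
  | .lam l A M => .lam l A (Tm.openRec (k+1) u M)
  | .app M l N => .app (Tm.openRec k u M) l (Tm.openRec k u N)

/-- `M.open0 N` is the body `M` of an abstraction with its bound variable
    replaced by `N`; since free variables are named, this is
    capture-avoiding substitution of the bound variable by construction. -/
def Tm.open0 (M u : Tm) : Tm := Tm.openRec 0 u M

/-- A context zone: a finite set of declarations `x : A`. -/
abbrev Ctx : Type := Finset (ℕ × Ty)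

/-- The variables declared in a context. -/
def Ctx.names (Γ : Ctx) : Finset ℕ := Γ.image Prod.fst

/-- The typing judgment `Γ; Ω; Δ ⊢ M : A` of the strict λ-calculus,
    over a fixed signature `Sg` assigning types to constants
    (a function, so each constant is declared at most once). -/
inductive Typ (Sg : ℕ → Option Ty) : Ctx → Ctx → Ctx → Tm → Ty → Prop
  | con {Γ Ω : Ctx} {c : ℕ} {A : Ty} :
      Sg c = some A → Typ Sg Γ Ω ∅ (.const c) A
  | idu {Γ Ω : Ctx} {x : ℕ} {A : Ty} :
      (x, A) ∈ Γ → Typ Sg Γ Ω ∅ (.fvar x) A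
  | id1 {Γ Ω : Ctx} {x : ℕ} {A : Ty} :
      Typ Sg Γ Ω {(x, A)} (.fvar x) A
  | lamu {Γ Ω Δ : Ctx} {x : ℕ} {A B : Ty} {M : Tm} :
      x ∉ Ctx.names (Γ ∪ Ω ∪ Δ) →
      Typ Sg (insert (x, A) Γ) Ω Δ (Tm.open0 M (.fvar x)) B →
      Typ Sg Γ Ω Δ (.lam .un A M) (.arr A .un B)
  | lam0 {Γ Ω Δ : Ctx} {x : ℕ} {A B : Ty} {M : Tm} :
      x ∉ Ctx.names (Γ ∪ Ω ∪ Δ) →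
      Typ Sg Γ (insert (x, A) Ω) Δ (Tm.open0 M (.fvar x)) B →
      Typ Sg Γ Ω Δ (.lam .zero A M) (.arr A .zero B)
  | lam1 {Γ Ω Δ : Ctx} {x : ℕ} {A B : Ty} {M : Tm} :
      x ∉ Ctx.names (Γ ∪ Ω ∪ Δ) →
      Typ Sg Γ Ω (insert (x, A) Δ) (Tm.open0 M (.fvar x)) B →
      Typ Sg Γ Ω Δ (.lam .one A M) (.arr A .one B)
  | appu {Γ Ω Δ : Ctx} {M N : Tm} {A B : Ty} :
      Typ Sg Γ Ω Δ M (.arr A .un B) →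
      Typ Sg (Γ ∪ Δ) Ω ∅ N A →
      Typ Sg Γ Ω Δ (.app M .un N) B
  | app0 {Γ Ω Δ : Ctx} {M N : Tm} {A B : Ty} :
      Typ Sg Γ Ω Δ M (.arr A .zero B) →
      Typ Sg (Γ ∪ Ω ∪ Δ) ∅ ∅ N A →
      Typ Sg Γ Ω Δ (.app M .zero N) B
  | app1 {Γ Ω ΔM ΔN : Ctx} {M N : Tm} {A B : Ty} :
      Disjoint ΔM ΔN →
      Typ Sg (Γ ∪ ΔN) Ω ΔM M (.arr A .one B) →
      Typ Sg (Γ ∪ ΔM) Ω ΔN N A →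
      Typ Sg Γ Ω (ΔM ∪ ΔN) (.app M .one N) B

lemma union_erase_eq {p : ℕ × Ty} {Γ S : Ctx} (hp : p ∈ S) :
    insert p Γ ∪ S.erase p = Γ ∪ S := by
  rw [Finset.insert_union, ← Finset.union_insert, Finset.insert_erase hp]

lemma ne_of_mem_fresh {p : ℕ × Ty} {y : ℕ} {A : Ty} {S : Ctx}
    (hp : p ∈ S) (hy : y ∉ Ctx.names S) : p ≠ (y, A) := by
  rintro rfl
  exact hy (Finset.mem_image_of_mem Prod.fst hp)

lemma fresh_insert {y : ℕ} {p : ℕ × Ty} {Γ : Ctx}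
    (hne : p.1 ≠ y) (hy : y ∉ Ctx.names Γ) : y ∉ Ctx.names (insert p Γ) := by
  simp only [Ctx.names, Finset.image_insert, Finset.mem_insert] at *
  tauto

lemma fresh_subset {y : ℕ} {S T : Ctx} (h : S ⊆ T)
    (hy : y ∉ Ctx.names T) : y ∉ Ctx.names S :=
  fun hm => hy (Finset.image_subset_image h hm)

lemma fresh_goal {y : ℕ} {p : ℕ × Ty} {Γ Ω Δ S : Ctx}
    (hy : y ∉ Ctx.names S) (hne : p.1 ≠ y)
    (hsub : Γ ∪ Ω ∪ Δ ⊆ insert p S) : y ∉ Ctx.names (Γ ∪ Ω ∪ Δ) :=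
  fresh_subset hsub (fresh_insert hne hy)

lemma move0 {Sg : ℕ → Option Ty} {Γ Ω Δ : Ctx} {M : Tm} {A : Ty}
    (h : Typ Sg Γ Ω Δ M A) :
    ∀ p ∈ Ω, Typ Sg (insert p Γ) (Ω.erase p) Δ M A := by
  induction h with
  | con hc => intro p hp; exact .con hc
  | idu hm => intro p hp; exact .idu (Finset.mem_insert_of_mem hm)
  | id1 => intro p hp; exact .id1
  | @lamu Γ Ω Δ y A B M hy hM ih =>
      intro p hp
      refine Typ.lamu (x := y) ?_ ?_
      · rw [union_erase_eq hp]; exact hy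
      · have := ih p hp
        rwa [Finset.insert_comm] at this
  | @lam0 Γ Ω Δ y A B M hy hM ih =>
      intro p hp
      have hne : p ≠ (y, A) := ne_of_mem_fresh (by simp [hp]) hy
      refine Typ.lam0 (x := y) ?_ ?_
      · rw [union_erase_eq hp]; exact hy
      · have := ih p (Finset.mem_insert_of_mem hp)
        rwa [Finset.erase_insert_of_ne (Ne.symm hne)] at this
  | @lam1 Γ Ω Δ y A B M hy hM ih =>
      intro p hp
      refine Typ.lam1 (x := y) ?_ (ih p hp)
      rw [union_erase_eq hp]; exact hy
  | @appu Γ Ω Δ M N A B hM hN ihM ihN =>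
      intro p hp
      refine Typ.appu (ihM p hp) ?_
      have := ihN p hp
      rwa [← Finset.insert_union] at this
  | @app0 Γ Ω Δ M N A B hM hN ihM ihN =>
      intro p hp
      refine Typ.app0 (ihM p hp) ?_
      rwa [union_erase_eq hp]
  | @app1 Γ Ω ΔM ΔN M N A B hd hM hN ihM ihN =>
      intro p hp
      have h1 := ihM p hp
      have h2 := ihN p hp
      rw [← Finset.insert_union] at h1 h2
      exact Typ.app1 hd h1 h2

lemma move1 {Sg : ℕ → Option Ty} {Γ Ω Δ : Ctx} {M : Tm} {A : Ty}
    (h : Typ Sg Γ Ω Δ M A) :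
    ∀ p ∈ Δ, Typ Sg (insert p Γ) Ω (Δ.erase p) M A := by
  induction h with
  | con hc => intro p hp; exact absurd hp (Finset.notMem_empty p)
  | idu hm => intro p hp; exact absurd hp (Finset.notMem_empty p)
  | @id1 Γ Ω y A =>
      intro p hp
      rw [Finset.mem_singleton] at hp
      subst hp
      rw [Finset.erase_singleton]
      exact Typ.idu (Finset.mem_insert_self _ _)
  | @lamu Γ Ω Δ y A B M hy hM ih =>
      intro p hp
      have hne : p.1 ≠ y := by
        intro he
        exact ne_of_mem_fresh (A := p.2) (by simp [hp]) hy (Prod.ext he rfl)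
      refine Typ.lamu (x := y) ?_ ?_
      · refine fresh_goal hy hne ?_
        intro q
        simp only [Finset.mem_insert, Finset.mem_union, Finset.mem_erase]
        tauto
      · have := ih p hp
        rwa [Finset.insert_comm] at this
  | @lam0 Γ Ω Δ y A B M hy hM ih =>
      intro p hp
      refine Typ.lam0 (x := y) ?_ (ih p hp)
      have hne : p.1 ≠ y := by
        intro he
        exact ne_of_mem_fresh (A := p.2) (by simp [hp]) hy (Prod.ext he rfl)
      refine fresh_goal hy hne ?_
      intro q
      simp only [Finset.mem_insert, Finset.mem_union, Finset.mem_erase]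
      tauto
  | @lam1 Γ Ω Δ y A B M hy hM ih =>
      intro p hp
      have hne : p ≠ (y, A) := ne_of_mem_fresh (by simp [hp]) hy
      have hne1 : p.1 ≠ y := by
        intro he
        exact ne_of_mem_fresh (A := p.2) (by simp [hp]) hy (Prod.ext he rfl)
      refine Typ.lam1 (x := y) ?_ ?_
      · refine fresh_goal hy hne1 ?_
        intro q
        simp only [Finset.mem_insert, Finset.mem_union, Finset.mem_erase]
        tauto
      · have := ih p (Finset.mem_insert_of_mem hp)
        rwa [Finset.erase_insert_of_ne (Ne.symm hne)] at this
  | @appu Γ Ω Δ M N A B hM hN ihM ihN =>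
      intro p hp
      refine Typ.appu (ihM p hp) ?_
      rwa [union_erase_eq hp]
  | @app0 Γ Ω Δ M N A B hM hN ihM ihN =>
      intro p hp
      refine Typ.app0 (ihM p hp) ?_
      have : insert p Γ ∪ Ω ∪ (Δ.erase p) = Γ ∪ Ω ∪ Δ := by
        ext q
        simp only [Finset.mem_union, Finset.mem_insert, Finset.mem_erase]
        by_cases hq : q = p
        · subst hq; simp [hp]
        · simp [hq]
      rwa [this]
  | @app1 Γ Ω ΔM ΔN M N A B hd hM hN ihM ihN =>
      intro p hp
      rw [Finset.mem_union] at hp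
      rcases hp with hp | hp
      · have h1 := ihM p hp
        rw [← Finset.insert_union] at h1
        have h2 : Typ Sg (insert p Γ ∪ ΔM.erase p) Ω ΔN N A := by
          rwa [union_erase_eq hp]
        have hpN : p ∉ ΔN := Finset.disjoint_left.1 hd hp
        have : ΔM.erase p ∪ ΔN = (ΔM ∪ ΔN).erase p := by
          rw [Finset.erase_union_distrib, Finset.erase_eq_of_notMem hpN]
        rw [← this]
        exact Typ.app1 (Finset.disjoint_of_subset_left (Finset.erase_subset _ _) hd) h1 h2
      · have h2 := ihN p hp
        rw [← Finset.insert_union] at h2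
        have h1 : Typ Sg (insert p Γ ∪ ΔN.erase p) Ω ΔM M (.arr A .one B) := by
          rwa [union_erase_eq hp]
        have hpM : p ∉ ΔM := Finset.disjoint_right.1 hd hp
        have : ΔM ∪ ΔN.erase p = (ΔM ∪ ΔN).erase p := by
          rw [Finset.erase_union_distrib, Finset.erase_eq_of_notMem hpM]
        rw [← this]
        exact Typ.app1 (Finset.disjoint_of_subset_right (Finset.erase_subset _ _) hd) h1 h2

/-- **Loosening.**  (1) If `Γ; (Ω, x:C); Δ ⊢ M : A`, then
    `(Γ, x:C); Ω; Δ ⊢ M : A`, and (2) if `Γ; Ω; (Δ, x:C) ⊢ M : A`,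
    then `(Γ, x:C); Ω; Δ ⊢ M : A`. -/
theorem loosening (Sg : ℕ → Option Ty) (Γ Ω Δ : Ctx) (M : Tm) (A C : Ty) (x : ℕ)
    (hx : x ∉ Ctx.names (Γ ∪ Ω ∪ Δ)) :
    (Typ Sg Γ (insert (x, C) Ω) Δ M A → Typ Sg (insert (x, C) Γ) Ω Δ M A) ∧
    (Typ Sg Γ Ω (insert (x, C) Δ) M A → Typ Sg (insert (x, C) Γ) Ω Δ M A) := by
  have hΩ : (x, C) ∉ Ω := fun h =>
    hx (Finset.mem_image_of_mem Prod.fst (by simp [h] : ((x, C) : ℕ × Ty) ∈ Γ ∪ Ω ∪ Δ))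
  have hΔ : (x, C) ∉ Δ := fun h =>
    hx (Finset.mem_image_of_mem Prod.fst (by simp [h] : ((x, C) : ℕ × Ty) ∈ Γ ∪ Ω ∪ Δ))
  constructor
  · intro h
    have := move0 h (x, C) (Finset.mem_insert_self _ _)
    rwa [Finset.erase_insert hΩ] at this
  · intro h
    have := move1 h (x, C) (Finset.mem_insert_self _ _)
    rwa [Finset.erase_insert hΔ] at this
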